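/- arXiv:2204.09926 — 7 statements merged into one kernel-verified Lean document; each statement's English description precedes it below -/
import Mathlib

section
/- Every Alexandroff T0 space (a T0 space in which arbitrary intersections of open sets are open) is a directed space. -/
variable {X : Type*}

/-- The specialization order: `x ⊑ y` iff `x ∈ closure {y}`. -/
def sle [TopologicalSpace X] (x y : X) : Prop := x ∈ closure {y}

/-- A directed subset with respect to the specialization order. -/
def IsDirSet [TopologicalSpace X] (D : Set X) : Prop :=
  D.Nonempty ∧ ∀ a ∈ D, ∀ b ∈ D, ∃ c ∈ D, sle a c ∧ sle b c

/-- `DConv D x`: the directed set `D`, viewed as a net (indexed by itself with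
the specialization order), converges to `x`. -/
def DConv [TopologicalSpace X] (D : Set X) (x : X) : Prop :=
  IsDirSet D ∧ ∀ U : Set X, IsOpen U → x ∈ U → ∃ d ∈ D, ∀ e ∈ D, sle d e → e ∈ U

/-- Directed open set. -/
def DOpen [TopologicalSpace X] (U : Set X) : Prop :=
  ∀ D : Set X, ∀ x : X, DConv D x → x ∈ U → (D ∩ U).Nonempty

/-- A directed space: every directed open set is open. -/
def IsDirectedSpace (X : Type*) [TopologicalSpace X] : Prop :=
  ∀ U : Set X, DOpen U → IsOpen U

/-- every Alexandroff T0 space is a directed space. -/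
theorem stmt_4 [TopologicalSpace X] [T0Space X]
    (hAlex : ∀ S : Set (Set X), (∀ U ∈ S, IsOpen U) → IsOpen (⋂₀ S)) :
    IsDirectedSpace X := by
  intro U hU
  rw [isOpen_iff_forall_mem_open]
  intro x hx
  refine ⟨⋂₀ {V | IsOpen V ∧ x ∈ V}, ?_, ?_, ?_⟩
  · intro y hy
    have hsle : sle x y := by
      rw [sle, mem_closure_iff]
      intro o ho hxo
      exact ⟨y, hy o ⟨ho, hxo⟩, rfl⟩
    have hconv : DConv {y} x := by
      refine ⟨⟨⟨y, rfl⟩, ?_⟩, ?_⟩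
      · intro a ha b hb
        rw [Set.mem_singleton_iff] at ha hb
        exact ⟨y, rfl, by rw [ha]; exact subset_closure rfl,
          by rw [hb]; exact subset_closure rfl⟩
      · intro V hV hxV
        refine ⟨y, rfl, ?_⟩
        rintro e rfl _
        rcases (mem_closure_iff.mp hsle) V hV hxV with ⟨z, hzV, rfl⟩
        exact hzV
    rcases hU {y} x hconv hx with ⟨d, rfl, hdU⟩
    exact hdU
  · exact hAlex _ (fun V hV => hV.1)
  · exact fun V hV => hV.2
end

section
/- Let X and Y be T0 spaces with Y a directed space. A function f : X → Y is directed continuous (monotone with respect to the specialization orders and preserving convergence of directed nets: D → x implies f(D) → f(x)) if and only if the preimage of every directed open set of Y is directed open in X. Moreover, if both X and Y are directed spaces, f is topologically continuous if and only if it is directed continuous. -/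
variable {X : Type*}

/-- Directed continuity: monotone for the specialization orders and preserving
limits of directed nets. -/
def DirCont {Y : Type*} [TopologicalSpace X] [TopologicalSpace Y] (f : X → Y) : Prop :=
  (∀ x y : X, sle x y → sle (f x) (f y)) ∧
  ∀ D : Set X, ∀ x : X, DConv D x → DConv (f '' D) (f x)

lemma sle_refl' [TopologicalSpace X] (x : X) : sle x x := subset_closure rfl

lemma sle_open' [TopologicalSpace X] {x y : X} (h : sle x y) {U : Set X} (hU : IsOpen U)
    (hx : x ∈ U) : y ∈ U := by
  obtain ⟨z, hzU, hzy⟩ := mem_closure_iff.mp h U hU hx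
  rwa [← hzy]

lemma isOpen_dOpen' [TopologicalSpace X] {U : Set X} (hU : IsOpen U) : DOpen U := by
  intro D x hD hx
  obtain ⟨d, hd, hdt⟩ := hD.2 U hU hx
  exact ⟨d, hd, hdt d hd (sle_refl' d)⟩

lemma dOpen_upper' [TopologicalSpace X] {U : Set X} (hU : DOpen U) {x y : X}
    (hx : x ∈ U) (hxy : sle x y) : y ∈ U := by
  obtain ⟨z, hz, hzU⟩ := hU {y} x
    ⟨⟨⟨y, rfl⟩, fun a ha b hb => ⟨y, rfl, by
      simp only [Set.mem_singleton_iff] at ha hb; subst ha; subst hb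
      exact ⟨sle_refl' _, sle_refl' _⟩⟩⟩,
     fun W hW hxW => ⟨y, rfl, fun e he _ => by
      simp only [Set.mem_singleton_iff] at he; subst he
      exact sle_open' hxy hW hxW⟩⟩ hx
  simp only [Set.mem_singleton_iff] at hz
  rwa [← hz]

/-- for T0 spaces `X`, `Y` with `Y` a directed space, `f` is
directed continuous iff preimages of directed opens are directed open; and if
`X` is also a directed space, continuity is equivalent to directed continuity. -/
theorem stmt_5 {Y : Type*} [TopologicalSpace X] [T0Space X] [TopologicalSpace Y] [T0Space Y]
    (hY : IsDirectedSpace Y) (f : X → Y) :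
    (DirCont f ↔ ∀ U : Set Y, DOpen U → DOpen (f ⁻¹' U)) ∧
    (IsDirectedSpace X → (Continuous f ↔ DirCont f)) := by
  have main : DirCont f ↔ ∀ U : Set Y, DOpen U → DOpen (f ⁻¹' U) := by
    constructor
    · intro ⟨_, hconv⟩ U hU D x hD hx
      obtain ⟨y, ⟨d, hd, rfl⟩, hyU⟩ := hU (f '' D) (f x) (hconv D x hD) hx
      exact ⟨d, hd, hyU⟩
    · intro hpre
      have hmono : ∀ x y : X, sle x y → sle (f x) (f y) := by
        intro x y hxy
        rw [sle, mem_closure_iff]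
        intro V hV hfx
        have : y ∈ f ⁻¹' V :=
          dOpen_upper' (hpre V (isOpen_dOpen' hV)) hfx hxy
        exact ⟨f y, this, rfl⟩
      refine ⟨hmono, fun D x hD => ?_⟩
      obtain ⟨⟨⟨d0, hd0⟩, hdir⟩, hconv⟩ := hD
      refine ⟨⟨⟨f d0, d0, hd0, rfl⟩, ?_⟩, ?_⟩
      · rintro _ ⟨a, ha, rfl⟩ _ ⟨b, hb, rfl⟩
        obtain ⟨c, hc, hac, hbc⟩ := hdir a ha b hb
        exact ⟨f c, ⟨c, hc, rfl⟩, hmono _ _ hac, hmono _ _ hbc⟩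
      · intro V hV hfxV
        obtain ⟨d, hd, hdV⟩ := hpre V (isOpen_dOpen' hV) D x ⟨⟨⟨d0, hd0⟩, hdir⟩, hconv⟩ hfxV
        refine ⟨f d, ⟨d, hd, rfl⟩, ?_⟩
        rintro _ ⟨e, he, rfl⟩ hde
        exact sle_open' hde hV hdV
  refine ⟨main, fun hX => ⟨fun hf => ?_, fun hf => ?_⟩⟩
  · exact main.mpr fun U hU =>
      isOpen_dOpen' ((hY U hU).preimage hf)
  · rw [continuous_def]
    intro V hV
    exact hX _ (main.mp hf V (isOpen_dOpen' hV))
end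

section
/- Let X be a directed space and LX = {↓F : F a nonempty finite subset of X} with the topology O_{⇒L}(LX) of ⇒_L-convergence open sets. Then the specialization order of the space (LX, O_{⇒L}(LX)) coincides with set inclusion: ↓F₁ ⊑ ↓F₂ iff ↓F₁ ⊆ ↓F₂. -/
variable {X : Type*}

/-- Down-closure with respect to the specialization order. -/
def dcl [TopologicalSpace X] (F : Set X) : Set X := {x | ∃ a ∈ F, sle x a}

/-- Membership in `LX`: down-closures of nonempty finite sets. -/
def InLX [TopologicalSpace X] (A : Set X) : Prop :=
  ∃ F : Finset X, F.Nonempty ∧ A = dcl (F : Set X)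

/-- A directed (under inclusion) family of elements of `LX`. -/
def LDir [TopologicalSpace X] (𝒟 : Set (Set X)) : Prop :=
  (∀ B ∈ 𝒟, InLX B) ∧ 𝒟.Nonempty ∧ ∀ A ∈ 𝒟, ∀ B ∈ 𝒟, ∃ C ∈ 𝒟, A ⊆ C ∧ B ⊆ C

/-- The convergence `𝒟 ⇒_L ↓F`. -/
def LConv [TopologicalSpace X] (𝒟 : Set (Set X)) (A : Set X) : Prop :=
  LDir 𝒟 ∧ ∃ F : Finset X, F.Nonempty ∧ A = dcl (F : Set X) ∧
    ∀ a ∈ F, ∃ D : Set X, D ⊆ ⋃₀ 𝒟 ∧ DConv D a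

/-- `⇒_L`-convergence open subsets of `LX`. -/
def LOpen [TopologicalSpace X] (𝒰 : Set (Set X)) : Prop :=
  (∀ A ∈ 𝒰, InLX A) ∧ ∀ 𝒟 A, LConv 𝒟 A → A ∈ 𝒰 → (𝒟 ∩ 𝒰).Nonempty

/-- the specialization order of `(LX, O_{⇒L}(LX))` coincides with
set inclusion. -/
theorem stmt_9 [TopologicalSpace X] [T0Space X] (hX : IsDirectedSpace X)
    (A B : Set X) (hA : InLX A) (hB : InLX B) :
    (∀ 𝒰 : Set (Set X), LOpen 𝒰 → A ∈ 𝒰 → B ∈ 𝒰) ↔ A ⊆ B := by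
  constructor
  · intro h
    -- B is closed (finite union of point closures)
    obtain ⟨FB, hFBne, hFB⟩ := hB
    have hBclosed : IsClosed B := by
      have : B = ⋃ b ∈ (FB : Set X), closure {b} := by
        rw [hFB]; ext x
        simp [dcl, sle]
      rw [this]
      exact (FB.finite_toSet).isClosed_biUnion (fun b _ => isClosed_closure)
    -- contrapositive via the open set 𝒰
    by_contra hAB
    obtain ⟨x, hxA, hxB⟩ := Set.not_subset.mp hAB
    set U : Set X := Bᶜ with hU
    have hUopen : IsOpen U := hBclosed.isOpen_compl
    set 𝒰 : Set (Set X) := {C | InLX C ∧ (C ∩ U).Nonempty} with h𝒰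
    have hLOpen : LOpen 𝒰 := by
      constructor
      · exact fun C hC => hC.1
      · rintro 𝒟 C ⟨hDir, F, hFne, hCF, hconv⟩ ⟨_, c, hcC, hcU⟩
        -- c ∈ C = dcl F, so c ≤ f for some f ∈ F; f ∈ U since U open
        rw [hCF] at hcC
        obtain ⟨f, hfF, hcf⟩ := hcC
        have hfU : f ∈ U := by
          have := mem_closure_iff.mp hcf U hUopen hcU
          obtain ⟨y, hyU, hy⟩ := this
          rwa [Set.mem_singleton_iff.mp hy] at hyU
        obtain ⟨D, hDsub, ⟨hDdir, hDconv⟩⟩ := hconv f hfF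
        obtain ⟨d, hdD, hd⟩ := hDconv U hUopen hfU
        obtain ⟨E, hE𝒟, hdE⟩ := hDsub hdD
        have hdU : d ∈ U := hd d hdD (subset_closure rfl)
        exact ⟨E, hE𝒟, hDir.1 E hE𝒟, d, hdE, hdU⟩
    have hA𝒰 : A ∈ 𝒰 := ⟨hA, x, hxA, hxB⟩
    have hB𝒰 := h 𝒰 hLOpen hA𝒰
    obtain ⟨_, b, hbB, hbU⟩ := hB𝒰
    exact hbU hbB
  · intro hAB 𝒰 h𝒰 hA𝒰
    obtain ⟨FA, hFAne, hFA⟩ := hA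
    have hconv : LConv {B} A := by
      refine ⟨⟨fun C hC => by rwa [Set.mem_singleton_iff.mp hC],
        ⟨B, rfl⟩, fun C hC D hD => ⟨B, rfl,
          le_of_eq (Set.mem_singleton_iff.mp hC),
          le_of_eq (Set.mem_singleton_iff.mp hD)⟩⟩,
        FA, hFAne, hFA, fun a haF => ?_⟩
      have haA : a ∈ A := by
        rw [hFA]; exact ⟨a, haF, subset_closure rfl⟩
      refine ⟨{a}, ?_, ⟨⟨a, rfl⟩, ?_⟩, ?_⟩
      · intro y hy
        rw [Set.mem_singleton_iff.mp hy]
        exact ⟨B, rfl, hAB haA⟩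
      · intro x hx y hy
        exact ⟨a, rfl, by rw [Set.mem_singleton_iff.mp hx]; exact subset_closure rfl,
          by rw [Set.mem_singleton_iff.mp hy]; exact subset_closure rfl⟩
      · intro U hUopen haU
        exact ⟨a, rfl, fun e he _ => by rwa [Set.mem_singleton_iff.mp he]⟩
    obtain ⟨C, hC𝒟, hC𝒰⟩ := h𝒰.2 {B} A hconv hA𝒰
    rwa [Set.mem_singleton_iff.mp hC𝒟] at hC𝒰
end

section
/- Let X be a directed space and let LX carry the topology O_{⇒L}(LX). Then (LX, O_{⇒L}(LX)) is itself a directed space, i.e., every directed open subset of LX is ⇒_L-open. -/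
variable {X : Type*}

/-- Specialization order of the space `(LX, O_{⇒L}(LX))`. -/
def sleL [TopologicalSpace X] (A B : Set X) : Prop :=
  ∀ 𝒰 : Set (Set X), LOpen 𝒰 → A ∈ 𝒰 → B ∈ 𝒰

/-- A directed subset of the space `LX` (with respect to its specialization order). -/
def LDirSetT [TopologicalSpace X] (𝒟 : Set (Set X)) : Prop :=
  (∀ B ∈ 𝒟, InLX B) ∧ 𝒟.Nonempty ∧
    ∀ A ∈ 𝒟, ∀ B ∈ 𝒟, ∃ C ∈ 𝒟, sleL A C ∧ sleL B C

/-- Topological convergence of a directed net in the space `(LX, O_{⇒L}(LX))`. -/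
def LTopConv [TopologicalSpace X] (𝒟 : Set (Set X)) (A : Set X) : Prop :=
  InLX A ∧ LDirSetT 𝒟 ∧
    ∀ 𝒰 : Set (Set X), LOpen 𝒰 → A ∈ 𝒰 → ∃ B ∈ 𝒟, ∀ C ∈ 𝒟, sleL B C → C ∈ 𝒰

lemma dconv_singleton [TopologicalSpace X] (a : X) : DConv {a} a := by
  refine ⟨⟨⟨a, rfl⟩, ?_⟩, ?_⟩
  · intro b hb c hc
    rw [Set.mem_singleton_iff] at hb hc; subst hb; subst hc
    exact ⟨c, rfl, sle_refl' c, sle_refl' c⟩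
  · intro U _ haU
    refine ⟨a, rfl, fun e he _ => ?_⟩
    rw [Set.mem_singleton_iff] at he; exact he ▸ haU

lemma sleL_of_subset [TopologicalSpace X] {A C : Set X}
    (hA : InLX A) (hC : InLX C) (hAC : A ⊆ C) : sleL A C := by
  intro 𝒰 h𝒰 hA𝒰
  have hconv : LConv {C} A := by
    obtain ⟨F, hFne, hFeq⟩ := hA
    refine ⟨⟨by rintro B rfl; exact hC, ⟨C, rfl⟩, ?_⟩, F, hFne, hFeq, ?_⟩
    · intro B _ B' _; exact ⟨C, rfl, by simp_all, by simp_all⟩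
    · intro a haF
      refine ⟨{a}, ?_, dconv_singleton a⟩
      intro x hx
      rw [Set.mem_singleton_iff] at hx; subst hx
      have : x ∈ A := hFeq ▸ ⟨x, haF, sle_refl' x⟩
      exact ⟨C, rfl, hAC this⟩
  obtain ⟨B, hB, hB𝒰⟩ := h𝒰.2 {C} A hconv hA𝒰
  rw [Set.mem_singleton_iff] at hB; subst hB
  exact hB𝒰

/-- `(LX, O_{⇒L}(LX))` is a directed space: every directed open
subset of `LX` is `⇒_L`-open. -/
theorem stmt_10 [TopologicalSpace X] [T0Space X] (hX : IsDirectedSpace X) :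
    ∀ 𝒰 : Set (Set X), (∀ A ∈ 𝒰, InLX A) →
      (∀ 𝒟 A, LTopConv 𝒟 A → A ∈ 𝒰 → (𝒟 ∩ 𝒰).Nonempty) →
      LOpen 𝒰 := by
  intro 𝒰 hmem hdo
  refine ⟨hmem, ?_⟩
  intro 𝒟 A hconv hA𝒰
  obtain ⟨⟨hLX, hne, hdir⟩, F, hFne, hFeq, hlim⟩ := hconv
  have htop : LTopConv 𝒟 A := by
    refine ⟨⟨F, hFne, hFeq⟩, ⟨hLX, hne, ?_⟩, ?_⟩
    · intro B hB B' hB'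
      obtain ⟨C, hC, hBC, hB'C⟩ := hdir B hB B' hB'
      exact ⟨C, hC, sleL_of_subset (hLX B hB) (hLX C hC) hBC,
        sleL_of_subset (hLX B' hB') (hLX C hC) hB'C⟩
    · intro 𝒱 h𝒱 hA𝒱
      obtain ⟨B, hB𝒟, hB𝒱⟩ := h𝒱.2 𝒟 A ⟨⟨hLX, hne, hdir⟩, F, hFne, hFeq, hlim⟩ hA𝒱
      exact ⟨B, hB𝒟, fun C _ hBC => hBC 𝒱 h𝒱 hB𝒱⟩
  exact hdo 𝒟 A htop hA𝒰
end

section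
/- Let X be a directed space. The binary union operation ∪ on LX = {↓F : F nonempty finite ⊆ X}, given by ↓F₁ ∪ ↓F₂ = ↓(F₁ ∪ F₂), is well-defined, idempotent, associative, commutative, inflationary (↓F₁ ∪ ↓F₂ ⊇ ↓F₁), and separately continuous with respect to the topology O_{⇒L}(LX); hence (LX, ∪) is a directed inflationary semilattice. -/
variable {X : Type*}

lemma dcl_union [TopologicalSpace X] (F G : Set X) :
    dcl (F ∪ G) = dcl F ∪ dcl G := by
  ext x
  constructor
  · rintro ⟨a, (ha | ha), hx⟩
    · exact Or.inl ⟨a, ha, hx⟩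
    · exact Or.inr ⟨a, ha, hx⟩
  · rintro (⟨a, ha, hx⟩ | ⟨a, ha, hx⟩)
    · exact ⟨a, Or.inl ha, hx⟩
    · exact ⟨a, Or.inr ha, hx⟩

/-- binary union on `LX` is well defined, idempotent, associative,
commutative, inflationary and separately continuous, so `(LX, ∪)` is a directed
inflationary semilattice. -/
theorem stmt_11 [TopologicalSpace X] [T0Space X] (hX : IsDirectedSpace X) :
    (∀ F G : Finset X, F.Nonempty → G.Nonempty →
        dcl (F : Set X) ∪ dcl (G : Set X) = dcl ((F : Set X) ∪ (G : Set X))) ∧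
    (∀ A B : Set X, InLX A → InLX B → InLX (A ∪ B)) ∧
    (∀ A : Set X, A ∪ A = A) ∧
    (∀ A B C : Set X, (A ∪ B) ∪ C = A ∪ (B ∪ C)) ∧
    (∀ A B : Set X, A ∪ B = B ∪ A) ∧
    (∀ A B : Set X, A ⊆ A ∪ B) ∧
    (∀ B : Set X, InLX B → ∀ 𝒟 A, LConv 𝒟 A → LConv ((· ∪ B) '' 𝒟) (A ∪ B)) := by
  classical
  
  refine ⟨?_, ?_, fun A => Set.union_self A, fun A B C => Set.union_assoc A B C,
    fun A B => Set.union_comm A B, fun A B => Set.subset_union_left, ?_⟩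
  · intro F G _ _
    rw [dcl_union]
  · rintro A B ⟨F, hF, rfl⟩ ⟨G, hG, rfl⟩
    exact ⟨F ∪ G, hF.mono Finset.subset_union_left, by
      rw [Finset.coe_union, dcl_union]⟩
  · rintro B ⟨G, hG, rfl⟩ 𝒟 A ⟨⟨hmem, hne, hdir⟩, F, hF, rfl, hconv⟩
    refine ⟨⟨?_, hne.image _, ?_⟩, F ∪ G, hF.mono Finset.subset_union_left,
      by rw [Finset.coe_union, dcl_union], ?_⟩
    · rintro _ ⟨C, hC, rfl⟩
      obtain ⟨FC, hFC, rfl⟩ := hmem C hC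
      exact ⟨FC ∪ G, hFC.mono Finset.subset_union_left, by rw [Finset.coe_union, dcl_union]⟩
    · rintro _ ⟨C, hC, rfl⟩ _ ⟨C', hC', rfl⟩
      obtain ⟨E, hE, hCE, hC'E⟩ := hdir C hC C' hC'
      exact ⟨E ∪ dcl G, ⟨E, hE, rfl⟩, Set.union_subset_union_left _ hCE,
        Set.union_subset_union_left _ hC'E⟩
    · intro a ha
      rw [Finset.mem_union] at ha
      rcases ha with ha | ha
      · obtain ⟨D, hD, hDc⟩ := hconv a ha
        refine ⟨D, fun x hx => ?_, hDc⟩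
        obtain ⟨C, hC, hxC⟩ := hD hx
        exact ⟨C ∪ dcl G, ⟨C, hC, rfl⟩, Or.inl hxC⟩
      · refine ⟨{a}, fun x hx => ?_, ⟨⟨⟨a, rfl⟩, ?_⟩, ?_⟩⟩
        · obtain ⟨C, hC⟩ := hne
          rw [Set.mem_singleton_iff] at hx
          exact ⟨C ∪ dcl G, ⟨C, hC, rfl⟩,
            Or.inr ⟨a, ha, by rw [hx]; exact subset_closure rfl⟩⟩
        · intro x hx y hy
          rw [Set.mem_singleton_iff] at hx hy
          exact ⟨a, rfl, by rw [hx]; exact subset_closure rfl,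
            by rw [hy]; exact subset_closure rfl⟩
        · intro U _ haU
          exact ⟨a, rfl, fun e he _ => by rw [Set.mem_singleton_iff] at he; rw [he]; exact haU⟩
end

section
/- Let P be a continuous domain. Then the ⇒_L-convergence topology on LP = {↓F : F nonempty finite ⊆ P} equals the relative Scott topology inherited from the Hoare powerdomain C(P) of nonempty Scott-closed sets; that is, the directed lower powerspace of (P, σ(P)) is a subspace of the lower powerdomain H(P). -/
variable {X : Type*}

/-- Scott-open subsets of a preordered set. -/
def ScottOpens [Preorder X] (U : Set X) : Prop :=
  IsUpperSet U ∧ ∀ D : Set X, D.Nonempty → DirectedOn (· ≤ ·) D →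
    ∀ a, IsLUB D a → a ∈ U → (D ∩ U).Nonempty

/-- Scott-closed subsets. -/
def ScottClosedSet [Preorder X] (A : Set X) : Prop :=
  IsLowerSet A ∧ ∀ D : Set X, D ⊆ A → D.Nonempty → DirectedOn (· ≤ ·) D →
    ∀ a, IsLUB D a → a ∈ A

/-- Nonempty Scott-closed set (element of `C(P)`). -/
def IsCl [Preorder X] (A : Set X) : Prop := A.Nonempty ∧ ScottClosedSet A

/-- `S` is the least upper bound in `C(P)` (ordered by inclusion) of the family `𝒟`. -/
def IsLubCl [Preorder X] (𝒟 : Set (Set X)) (S : Set X) : Prop :=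
  IsCl S ∧ (∀ A ∈ 𝒟, A ⊆ S) ∧ ∀ T, IsCl T → (∀ A ∈ 𝒟, A ⊆ T) → S ⊆ T

/-- Scott-open family of nonempty Scott-closed sets, i.e. Scott-open subsets of `C(P)`. -/
def SOC [Preorder X] (𝒲 : Set (Set X)) : Prop :=
  (∀ A ∈ 𝒲, IsCl A) ∧
  (∀ A B, A ∈ 𝒲 → IsCl B → A ⊆ B → B ∈ 𝒲) ∧
  ∀ 𝒟 S, (∀ A ∈ 𝒟, IsCl A) → 𝒟.Nonempty → DirectedOn (· ⊆ ·) 𝒟 →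
    IsLubCl 𝒟 S → S ∈ 𝒲 → (𝒟 ∩ 𝒲).Nonempty

/-- The way-below relation. -/
def wayBelow [Preorder X] (y x : X) : Prop :=
  ∀ D : Set X, D.Nonempty → DirectedOn (· ≤ ·) D → ∀ a, IsLUB D a → x ≤ a → ∃ d ∈ D, y ≤ d

/-- A continuous domain: a dcpo in which every element is the directed supremum
of the elements way below it. -/
def IsContinuousDomain (X : Type*) [Preorder X] : Prop :=
  (∀ D : Set X, D.Nonempty → DirectedOn (· ≤ ·) D → ∃ a, IsLUB D a) ∧
  ∀ x : X, {y | wayBelow y x}.Nonempty ∧ DirectedOn (· ≤ ·) {y | wayBelow y x} ∧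
    IsLUB {y | wayBelow y x} x

set_option linter.unusedSectionVars false

section Aux
variable {P : Type*} [PartialOrder P] [TopologicalSpace P]

/-- In a directed-on set, every nonempty finite subset has an upper bound in the set. -/
lemma dirOn_finset_le {D : Set P} (hD : DirectedOn (· ≤ ·) D) (hne : D.Nonempty)
    (t : Finset P) (ht : ↑t ⊆ D) : ∃ z ∈ D, ∀ y ∈ t, y ≤ z := by
  classical
  induction t using Finset.induction with
  | empty => exact ⟨hne.choose, hne.choose_spec, fun y hy => absurd hy (Finset.notMem_empty y)⟩
  | @insert a s ha ih =>
    have hs : ↑s ⊆ D := fun x hx =>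
      ht (Finset.mem_coe.2 (Finset.mem_insert_of_mem (Finset.mem_coe.1 hx)))
    obtain ⟨z, hzD, hz⟩ := ih hs
    have haD : a ∈ D := ht (by simp)
    obtain ⟨w, hwD, haw, hzw⟩ := hD a haD z hzD
    refine ⟨w, hwD, ?_⟩
    intro y hy
    rcases Finset.mem_insert.1 hy with rfl | hy
    · exact haw
    · exact (hz y hy).trans hzw

lemma sle_iff (hscott : ∀ U : Set P, IsOpen U ↔ ScottOpens U) (x y : P) :
    sle x y ↔ x ≤ y := by
  constructor
  · intro h
    by_contra hxy
    have hU : IsOpen {z : P | ¬ z ≤ y} := by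
      rw [hscott]
      refine ⟨fun a b hab ha hb => ha (hab.trans hb), ?_⟩
      intro D hne hdir a hlub haU
      by_contra hc
      have : ∀ d ∈ D, d ≤ y := by
        intro d hd
        by_contra hdy
        exact hc ⟨d, hd, hdy⟩
      exact haU (hlub.2 this)
    have := (mem_closure_iff.1 h) _ hU hxy
    rcases this with ⟨z, hz1, hz2⟩
    rw [Set.mem_singleton_iff] at hz2
    subst hz2
    exact hz1 le_rfl
  · intro h
    show x ∈ closure ({y} : Set P)
    rw [mem_closure_iff]
    intro o ho hxo
    have := ((hscott o).1 ho).1 h hxo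
    exact ⟨y, this, rfl⟩

lemma sle_refl (x : P) : sle x x := subset_closure rfl

lemma closed_scottClosed (hscott : ∀ U : Set P, IsOpen U ↔ ScottOpens U)
    {C : Set P} (hC : IsClosed C) : ScottClosedSet C := by
  have hop : ScottOpens Cᶜ := (hscott _).1 hC.isOpen_compl
  constructor
  · intro a b hab hb
    by_contra ha
    exact (hop.1 hab ha) hb
  · intro D hDC hne hdir a hlub
    by_contra ha
    obtain ⟨d, hd, hdc⟩ := hop.2 D hne hdir a hlub ha
    exact hdc (hDC hd)

lemma isCl_dcl (hscott : ∀ U : Set P, IsOpen U ↔ ScottOpens U)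
    {F : Finset P} (hF : F.Nonempty) : IsCl (dcl (F : Set P)) := by
  have hmem : ∀ x ∈ F, x ∈ dcl (F : Set P) := fun x hx => ⟨x, hx, sle_refl x⟩
  refine ⟨⟨hF.choose, hmem _ hF.choose_spec⟩, ?_, ?_⟩
  · intro a b hab hb
    obtain ⟨c, hc, hbc⟩ := hb
    exact ⟨c, hc, (sle_iff hscott _ _).2 (hab.trans ((sle_iff hscott _ _).1 hbc))⟩
  · intro D hDA hne hdir a hlub
    by_contra ha
    have key : ∀ x ∈ F, ∃ d ∈ D, ¬ d ≤ x := by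
      intro x hx
      by_contra hc
      push_neg at hc
      exact ha ⟨x, hx, (sle_iff hscott _ _).2 (hlub.2 hc)⟩
    classical
    have key2 : ∀ x : P, ∃ d, x ∈ F → d ∈ D ∧ ¬ d ≤ x := by
      intro x
      by_cases hx : x ∈ F
      · obtain ⟨d, hd, hdx⟩ := key x hx
        exact ⟨d, fun _ => ⟨hd, hdx⟩⟩
      · exact ⟨hne.choose, fun h => absurd h hx⟩
    choose f hf using key2
    obtain ⟨z, hzD, hz⟩ := dirOn_finset_le hdir hne (F.image f)
      (by intro y hy
          obtain ⟨x, hx, rfl⟩ := Finset.mem_image.1 (Finset.mem_coe.1 hy)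
          exact (hf x hx).1)
    obtain ⟨x0, hx0F, hzx0⟩ := hDA hzD
    have hfz : f x0 ≤ z := hz _ (Finset.mem_image_of_mem f (Finset.mem_coe.1 hx0F))
    exact (hf x0 (Finset.mem_coe.1 hx0F)).2 (hfz.trans ((sle_iff hscott _ _).1 hzx0))

lemma wayBelow_le {y x : P} (h : wayBelow y x) : y ≤ x := by
  obtain ⟨d, hd, hyd⟩ := h {x} ⟨x, rfl⟩ (directedOn_singleton x) x
    isLUB_singleton le_rfl
  rw [Set.mem_singleton_iff] at hd; subst hd; exact hyd

lemma le_wayBelow {y' y x x' : P} (hy : y' ≤ y) (h : wayBelow y x) (hx : x ≤ x') :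
    wayBelow y' x' := by
  intro D hne hdir a hlub hxa
  obtain ⟨d, hd, hyd⟩ := h D hne hdir a hlub (hx.trans hxa)
  exact ⟨d, hd, hy.trans hyd⟩

lemma interp (hcont : IsContinuousDomain P) {y a : P} (h : wayBelow y a) :
    ∃ w, wayBelow y w ∧ wayBelow w a := by
  set I : Set P := {z | ∃ w, wayBelow z w ∧ wayBelow w a} with hI
  obtain ⟨⟨w0, hw0⟩, hdira, hluba⟩ := hcont.2 a
  obtain ⟨⟨z0, hz0⟩, _, _⟩ := hcont.2 w0
  have hIne : I.Nonempty := ⟨z0, w0, hz0, hw0⟩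
  have hIdir : DirectedOn (· ≤ ·) I := by
    rintro z1 ⟨w1, hz1, hw1⟩ z2 ⟨w2, hz2, hw2⟩
    obtain ⟨w, hw, h1w, h2w⟩ := hdira w1 hw1 w2 hw2
    obtain ⟨⟨u0, hu0⟩, hdirw, hlubw⟩ := hcont.2 w
    have hz1w : wayBelow z1 w := le_wayBelow le_rfl hz1 h1w
    have hz2w : wayBelow z2 w := le_wayBelow le_rfl hz2 h2w
    obtain ⟨z, hz, h1z, h2z⟩ := hdirw z1 hz1w z2 hz2w
    exact ⟨z, ⟨w, hz, hw⟩, h1z, h2z⟩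
  have hlubI : IsLUB I a := by
    constructor
    · rintro z ⟨w, hz, hw⟩
      exact (wayBelow_le hz).trans (wayBelow_le hw)
    · intro b hb
      have : ∀ w ∈ {y | wayBelow y a}, w ≤ b := by
        intro w hw
        obtain ⟨_, _, hlubw⟩ := hcont.2 w
        refine hlubw.2 ?_
        intro z hz
        exact hb ⟨w, hz, hw⟩
      exact hluba.2 this
  obtain ⟨z, ⟨w, hzw, hwa⟩, hyz⟩ := h I hIne hIdir a hlubI le_rfl
  exact ⟨w, le_wayBelow hyz hzw le_rfl, hwa⟩

lemma upset_scottOpen (hcont : IsContinuousDomain P) (y : P) :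
    ScottOpens {z : P | wayBelow y z} := by
  constructor
  · intro a b hab ha
    exact le_wayBelow le_rfl ha hab
  · intro D hne hdir a hlub ha
    obtain ⟨w, hyw, hwa⟩ := interp hcont ha
    obtain ⟨d, hd, hwd⟩ := hwa D hne hdir a hlub le_rfl
    exact ⟨d, hd, le_wayBelow le_rfl hyw hwd⟩

lemma dconv_le_lub (hscott : ∀ U : Set P, IsOpen U ↔ ScottOpens U)
    {D : Set P} {a s : P} (h : DConv D a) (hs : IsLUB D s) : a ≤ s := by
  by_contra hns
  have hU : IsOpen {z : P | ¬ z ≤ s} := by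
    rw [hscott]
    refine ⟨fun u v huv hu hv => hu (huv.trans hv), ?_⟩
    intro E hne hdir b hlub hbU
    by_contra hc
    have : ∀ e ∈ E, e ≤ s := fun e he => by
      by_contra h'; exact hc ⟨e, he, h'⟩
    exact hbU (hlub.2 this)
  obtain ⟨d, hd, hall⟩ := h.2 _ hU hns
  exact (hall d hd (sle_refl d)) (hs.1 hd)

lemma dconv_waybelow (hscott : ∀ U : Set P, IsOpen U ↔ ScottOpens U)
    (hcont : IsContinuousDomain P) (a : P) : DConv {y : P | wayBelow y a} a := by
  obtain ⟨hne, hdir, hlub⟩ := hcont.2 a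
  refine ⟨⟨hne, ?_⟩, ?_⟩
  · intro u hu v hv
    obtain ⟨c, hc, h1, h2⟩ := hdir u hu v hv
    exact ⟨c, hc, (sle_iff hscott _ _).2 h1, (sle_iff hscott _ _).2 h2⟩
  · intro U hU haU
    obtain ⟨d, hd, hdU⟩ := ((hscott U).1 hU).2 _ hne hdir a hlub haU
    refine ⟨d, hd, fun e he hde => ((hscott U).1 hU).1 ((sle_iff hscott _ _).1 hde) hdU⟩

lemma finset_subset_union_directed {𝒟 : Set (Set P)} (hne : 𝒟.Nonempty)
    (hdir : DirectedOn (· ⊆ ·) 𝒟) (G : Finset P) (hG : ↑G ⊆ ⋃₀ 𝒟) :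
    ∃ B ∈ 𝒟, ↑G ⊆ B := by
  classical
  induction G using Finset.induction with
  | empty =>
    exact ⟨hne.choose, hne.choose_spec,
      fun x hx => absurd (Finset.mem_coe.1 hx) (Finset.notMem_empty x)⟩
  | @insert a s ha ih =>
    obtain ⟨B, hB, hsB⟩ := ih (fun x hx =>
      hG (Finset.mem_coe.2 (Finset.mem_insert_of_mem (Finset.mem_coe.1 hx))))
    obtain ⟨C, hC, haC⟩ := hG (Finset.mem_coe.2 (Finset.mem_insert_self a s))
    obtain ⟨E, hE, hBE, hCE⟩ := hdir B hB C hC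
    refine ⟨E, hE, ?_⟩
    intro x hx
    rcases Finset.mem_insert.1 hx with rfl | hx
    · exact hCE haC
    · exact hBE (hsB hx)

end Aux

/-- for a continuous domain `P` with the Scott topology, the
`⇒_L`-topology on `LP` equals the relative Scott topology inherited from the
Hoare powerdomain `C(P)`. -/
theorem stmt_14 {P : Type*} [PartialOrder P] [TopologicalSpace P]
    (hscott : ∀ U : Set P, IsOpen U ↔ ScottOpens U)
    (hcont : IsContinuousDomain P) :
    ∀ 𝒱 : Set (Set P),
      LOpen 𝒱 ↔ ∃ 𝒲 : Set (Set P), SOC 𝒲 ∧ 𝒱 = {A | A ∈ 𝒲 ∧ InLX A} := by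
  classical
  intro 𝒱
  constructor
  · -- hard direction: L-open implies relatively Scott-open
    intro hV
    refine ⟨{B | IsCl B ∧ ∃ A ∈ 𝒱, A ⊆ B}, ⟨?_, ?_, ?_⟩, ?_⟩
    · exact fun A hA => hA.1
    · rintro A B ⟨hACl, A', hA'V, hA'A⟩ hBCl hAB
      exact ⟨hBCl, A', hA'V, hA'A.trans hAB⟩
    · rintro 𝒟 S hcl hne hdir hlub ⟨hSCl, A0, hA0V, hA0S⟩
      obtain ⟨F, hFne, hA0eq⟩ := hV.1 A0 hA0V
      set L : Set P := ⋃₀ 𝒟 with hLdef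
      have hLlow : IsLowerSet L := by
        rintro a b hab ⟨B, hB, hbB⟩
        exact ⟨B, hB, (hcl B hB).2.1 hab hbB⟩
      have hLne : L.Nonempty := by
        obtain ⟨B, hB⟩ := hne
        obtain ⟨b, hb⟩ := (hcl B hB).1
        exact ⟨b, B, hB, hb⟩
      have hScl : S ⊆ closure L := by
        refine hlub.2.2 (closure L)
          ⟨hLne.mono subset_closure, closed_scottClosed hscott isClosed_closure⟩ ?_
        intro A hA x hx
        exact subset_closure ⟨A, hA, hx⟩
      have hwbL : ∀ a ∈ S, ∀ y, wayBelow y a → y ∈ L := by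
        intro a haS y hy
        have hopen : IsOpen {z : P | wayBelow y z} := (hscott _).2 (upset_scottOpen hcont y)
        obtain ⟨l, hl1, hl2⟩ := mem_closure_iff.1 (hScl haS) _ hopen hy
        exact hLlow (wayBelow_le hl1) hl2
      set 𝒟' : Set (Set P) :=
        {E | ∃ G : Finset P, G.Nonempty ∧ ↑G ⊆ L ∧ E = dcl (G : Set P)} with h𝒟'
      have hLDir : LDir 𝒟' := by
        refine ⟨?_, ?_, ?_⟩
        · rintro E ⟨G, hGne, hGL, rfl⟩
          exact ⟨G, hGne, rfl⟩
        · obtain ⟨b, hb⟩ := hLne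
          exact ⟨dcl (({b} : Finset P) : Set P), {b}, Finset.singleton_nonempty b,
            by simpa using hb, rfl⟩
        · rintro A ⟨G1, hG1ne, hG1L, rfl⟩ B ⟨G2, hG2ne, hG2L, rfl⟩
          refine ⟨dcl ((G1 ∪ G2 : Finset P) : Set P),
            ⟨G1 ∪ G2, Finset.Nonempty.inl hG1ne, ?_, rfl⟩, ?_, ?_⟩
          · intro x hx
            rcases Finset.mem_union.1 (Finset.mem_coe.1 hx) with h | h
            · exact hG1L (Finset.mem_coe.2 h)
            · exact hG2L (Finset.mem_coe.2 h)
          · rintro x ⟨g, hg, hxg⟩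
            exact ⟨g, Finset.mem_coe.2 (Finset.mem_union_left _ (Finset.mem_coe.1 hg)), hxg⟩
          · rintro x ⟨g, hg, hxg⟩
            exact ⟨g, Finset.mem_coe.2 (Finset.mem_union_right _ (Finset.mem_coe.1 hg)), hxg⟩
      have hA0Ssub : ∀ a ∈ F, a ∈ S := by
        intro a haF
        exact hA0S (hA0eq ▸ ⟨a, Finset.mem_coe.2 haF, sle_refl a⟩)
      have hLConv : LConv 𝒟' A0 := by
        refine ⟨hLDir, F, hFne, hA0eq, ?_⟩
        intro a haF
        refine ⟨{y | wayBelow y a}, ?_, dconv_waybelow hscott hcont a⟩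
        intro y hy
        have hyL : y ∈ L := hwbL a (hA0Ssub a haF) y hy
        exact ⟨dcl (({y} : Finset P) : Set P),
          ⟨{y}, Finset.singleton_nonempty y, by simpa using hyL, rfl⟩,
          ⟨y, by simp, sle_refl y⟩⟩
      obtain ⟨E, hE𝒟', hEV⟩ := hV.2 𝒟' A0 hLConv hA0V
      obtain ⟨G, hGne, hGL, rfl⟩ := hE𝒟'
      obtain ⟨B, hB, hGB⟩ := finset_subset_union_directed hne hdir G hGL
      refine ⟨B, hB, hcl B hB, dcl (G : Set P), hEV, ?_⟩
      rintro x ⟨g, hg, hxg⟩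
      exact (hcl B hB).2.1 ((sle_iff hscott _ _).1 hxg) (hGB hg)
    · -- 𝒱 = 𝒲 ∩ LP
      ext A
      simp only [Set.mem_setOf_eq]
      constructor
      · intro hA
        obtain ⟨F, hFne, hAeq⟩ := hV.1 A hA
        exact ⟨⟨hAeq ▸ isCl_dcl hscott hFne, A, hA, subset_rfl⟩, hV.1 A hA⟩
      · rintro ⟨⟨hACl, A', hA'V, hA'A⟩, hALX⟩
        obtain ⟨F', hF'ne, hA'eq⟩ := hV.1 A' hA'V
        have hconv : LConv {A} A' := by
          refine ⟨⟨?_, ⟨A, rfl⟩, ?_⟩, F', hF'ne, hA'eq, ?_⟩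
          · rintro B hB
            rw [Set.mem_singleton_iff] at hB
            exact hB ▸ hALX
          · rintro B hB C hC
            rw [Set.mem_singleton_iff] at hB hC
            exact ⟨A, rfl, hB ▸ subset_rfl, hC ▸ subset_rfl⟩
          · intro a haF
            have haA : a ∈ A := hA'A (hA'eq ▸ ⟨a, Finset.mem_coe.2 haF, sle_refl a⟩)
            refine ⟨{a}, ?_, ⟨⟨a, rfl⟩, ?_⟩, ?_⟩
            · intro y hy
              rw [Set.mem_singleton_iff] at hy
              exact ⟨A, rfl, hy ▸ haA⟩
            · rintro u hu v hv
              rw [Set.mem_singleton_iff] at hu hv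
              exact ⟨a, rfl, hu ▸ sle_refl a, hv ▸ sle_refl a⟩
            · intro U hU haU
              refine ⟨a, rfl, ?_⟩
              intro e he _
              rw [Set.mem_singleton_iff] at he
              exact he ▸ haU
        obtain ⟨B, hB, hBV⟩ := hV.2 {A} A' hconv hA'V
        rw [Set.mem_singleton_iff] at hB
        exact hB ▸ hBV
  · -- easy direction
    rintro ⟨𝒲, hW, rfl⟩
    constructor
    · exact fun A hA => hA.2
    · rintro 𝒟 A ⟨hLD, F, hFne, hAeq, hFconv⟩ ⟨hAW, hALX⟩
      set S : Set P := {x | ∀ T : Set P, ScottClosedSet T → ⋃₀ 𝒟 ⊆ T → x ∈ T} with hSdef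
      have hUS : ⋃₀ 𝒟 ⊆ S := fun x hx T hT hsub => hsub hx
      have hSCl : ScottClosedSet S := by
        constructor
        · intro a b hab hb T hT hsub
          exact hT.1 hab (hb T hT hsub)
        · intro D hDS hne hdir a hlub T hT hsub
          exact hT.2 D (fun d hd => hDS hd T hT hsub) hne hdir a hlub
      have hSne : S.Nonempty := by
        obtain ⟨B, hB⟩ := hLD.2.1
        obtain ⟨G, hGne, hBeq⟩ := hLD.1 B hB
        obtain ⟨g, hg⟩ := hGne
        exact ⟨g, hUS ⟨B, hB, hBeq ▸ ⟨g, Finset.mem_coe.2 hg, sle_refl g⟩⟩⟩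
      have hlubS : IsLubCl 𝒟 S := by
        refine ⟨⟨hSne, hSCl⟩, fun B hB x hx => hUS ⟨B, hB, hx⟩, ?_⟩
        intro T hT hall x hx
        refine hx T hT.2 ?_
        rintro y ⟨B, hB, hy⟩
        exact hall B hB hy
      have hcl𝒟 : ∀ B ∈ 𝒟, IsCl B := by
        intro B hB
        obtain ⟨G, hGne, hBeq⟩ := hLD.1 B hB
        exact hBeq ▸ isCl_dcl hscott hGne
      have hAS : A ⊆ S := by
        have hFS : ∀ a ∈ F, a ∈ S := by
          intro a haF
          obtain ⟨D, hDsub, hDconv⟩ := hFconv a haF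
          have hDdir : DirectedOn (· ≤ ·) D := by
            intro u hu v hv
            obtain ⟨c, hc, h1, h2⟩ := hDconv.1.2 u hu v hv
            exact ⟨c, hc, (sle_iff hscott _ _).1 h1, (sle_iff hscott _ _).1 h2⟩
          obtain ⟨s, hs⟩ := hcont.1 D hDconv.1.1 hDdir
          have has : a ≤ s := dconv_le_lub hscott hDconv hs
          have hsS : s ∈ S :=
            hSCl.2 D (fun d hd => hUS (hDsub hd)) hDconv.1.1 hDdir s hs
          exact hSCl.1 has hsS
        rintro x hx
        rw [hAeq] at hx
        obtain ⟨a, haF, hxa⟩ := hx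
        exact hSCl.1 ((sle_iff hscott _ _).1 hxa) (hFS a (Finset.mem_coe.1 haF))
      have hSW : S ∈ 𝒲 := hW.2.1 A S hAW ⟨hSne, hSCl⟩ hAS
      obtain ⟨B, hB𝒟, hBW⟩ := hW.2.2 𝒟 S hcl𝒟 hLD.2.1 hLD.2.2 hlubS hSW
      exact ⟨B, hB𝒟, hBW, hLD.1 B hB𝒟⟩
end

section
/- Let X be a directed space with a continuous binary infimum operation ∧ (i.e., X is a directed deflationary semilattice). Define on the directed lower powerspace P_L(X) = (LX, ∪) the operation ↓F₁ ⊓ ↓F₂ = ↓{a ∧ b : a ∈ F₁, b ∈ F₂}. Then ⊓ is well-defined, idempotent, associative, commutative, deflationary, and together with ∪ satisfies both distributive laws: ↓F₁ ⊓ (↓F₂ ∪ ↓F₃) = (↓F₁ ⊓ ↓F₂) ∪ (↓F₁ ⊓ ↓F₃) and ↓F₁ ∪ (↓F₂ ⊓ ↓F₃) = (↓F₁ ∪ ↓F₂) ⊓ (↓F₁ ∪ ↓F₃). -/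
variable {X : Type*}

/-- Pointwise meet of two sets: `{a ∧ b : a ∈ F, b ∈ G}`. -/
def msetOf {X : Type*} (m : X → X → X) (F G : Set X) : Set X :=
  {z | ∃ a ∈ F, ∃ b ∈ G, z = m a b}

lemma sle_trans' [TopologicalSpace X] {x y z : X} (h1 : sle x y) (h2 : sle y z) :
    sle x z := by
  have : closure {y} ⊆ closure {z} :=
    closure_minimal (Set.singleton_subset_iff.mpr h2) isClosed_closure
  exact this h1

lemma dcl_mono_of [TopologicalSpace X] {A B : Set X}
    (h : ∀ a ∈ A, ∃ b ∈ B, sle a b) : dcl A ⊆ dcl B := by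
  rintro x ⟨a, ha, hxa⟩
  obtain ⟨b, hb, hab⟩ := h a ha
  exact ⟨b, hb, sle_trans' hxa hab⟩

lemma dcl_eq_of [TopologicalSpace X] {A B : Set X}
    (h1 : ∀ a ∈ A, ∃ b ∈ B, sle a b) (h2 : ∀ b ∈ B, ∃ a ∈ A, sle b a) :
    dcl A = dcl B :=
  Set.Subset.antisymm (dcl_mono_of h1) (dcl_mono_of h2)

/-- if `X` is a directed deflationary semilattice (`∧` is a
continuous binary infimum operation), then the meet `↓F₁ ⊓ ↓F₂ = ↓{a ∧ b}`
on the lower powerspace `P_L(X)` is well-defined, idempotent, associative,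
commutative, deflationary and distributes over union in both ways. -/
theorem stmt_18 [TopologicalSpace X] [T0Space X] (hX : IsDirectedSpace X)
    (m : X → X → X)
    (hc1 : ∀ y : X, Continuous fun x => m x y)
    (hc2 : ∀ x : X, Continuous fun y => m x y)
    (hm : ∀ a b : X, sle (m a b) a ∧ sle (m a b) b ∧
      ∀ c : X, sle c a → sle c b → sle c (m a b)) :
    (∀ F₁ F₂ G₁ G₂ : Finset X, F₁.Nonempty → F₂.Nonempty → G₁.Nonempty → G₂.Nonempty →
        dcl (F₁ : Set X) = dcl (F₂ : Set X) → dcl (G₁ : Set X) = dcl (G₂ : Set X) →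
        dcl (msetOf m (F₁ : Set X) (G₁ : Set X)) = dcl (msetOf m (F₂ : Set X) (G₂ : Set X))) ∧
    (∀ F : Finset X, F.Nonempty →
        dcl (msetOf m (F : Set X) (F : Set X)) = dcl (F : Set X)) ∧
    (∀ F G H : Finset X, F.Nonempty → G.Nonempty → H.Nonempty →
        dcl (msetOf m (msetOf m (F : Set X) (G : Set X)) (H : Set X)) =
          dcl (msetOf m (F : Set X) (msetOf m (G : Set X) (H : Set X)))) ∧
    (∀ F G : Finset X, F.Nonempty → G.Nonempty →
        dcl (msetOf m (F : Set X) (G : Set X)) = dcl (msetOf m (G : Set X) (F : Set X))) ∧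
    (∀ F G : Finset X, F.Nonempty → G.Nonempty →
        dcl (msetOf m (F : Set X) (G : Set X)) ⊆ dcl (F : Set X)) ∧
    (∀ F G H : Finset X, F.Nonempty → G.Nonempty → H.Nonempty →
        dcl (msetOf m (F : Set X) ((G : Set X) ∪ (H : Set X))) =
          dcl (msetOf m (F : Set X) (G : Set X)) ∪ dcl (msetOf m (F : Set X) (H : Set X))) ∧
    (∀ F G H : Finset X, F.Nonempty → G.Nonempty → H.Nonempty →
        dcl ((F : Set X) ∪ msetOf m (G : Set X) (H : Set X)) =
          dcl (msetOf m ((F : Set X) ∪ (G : Set X)) ((F : Set X) ∪ (H : Set X)))) := by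
  have hle1 : ∀ a b : X, sle (m a b) a := fun a b => (hm a b).1
  have hle2 : ∀ a b : X, sle (m a b) b := fun a b => (hm a b).2.1
  have hglb : ∀ a b c : X, sle c a → sle c b → sle c (m a b) :=
    fun a b c h1 h2 => (hm a b).2.2 c h1 h2
  have hmono : ∀ {a a' b b' : X}, sle a a' → sle b b' → sle (m a b) (m a' b') := by
    intro a a' b b' h1 h2
    exact hglb a' b' _ (sle_trans' (hle1 a b) h1) (sle_trans' (hle2 a b) h2)
  refine ⟨?_, ?_, ?_, ?_, ?_, ?_, ?_⟩
  · -- well-defined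
    intro F₁ F₂ G₁ G₂ _ _ _ _ hF hG
    have hF1 : ∀ a ∈ (F₁ : Set X), ∃ b ∈ (F₂ : Set X), sle a b := by
      intro a ha
      have : a ∈ dcl (F₂ : Set X) := hF ▸ ⟨a, ha, sle_refl' a⟩
      exact this
    have hF2 : ∀ a ∈ (F₂ : Set X), ∃ b ∈ (F₁ : Set X), sle a b := by
      intro a ha
      have : a ∈ dcl (F₁ : Set X) := hF ▸ ⟨a, ha, sle_refl' a⟩
      exact this
    have hG1 : ∀ a ∈ (G₁ : Set X), ∃ b ∈ (G₂ : Set X), sle a b := by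
      intro a ha
      have : a ∈ dcl (G₂ : Set X) := hG ▸ ⟨a, ha, sle_refl' a⟩
      exact this
    have hG2 : ∀ a ∈ (G₂ : Set X), ∃ b ∈ (G₁ : Set X), sle a b := by
      intro a ha
      have : a ∈ dcl (G₁ : Set X) := hG ▸ ⟨a, ha, sle_refl' a⟩
      exact this
    apply dcl_eq_of
    · rintro z ⟨a, ha, b, hb, rfl⟩
      obtain ⟨a', ha', haa⟩ := hF1 a ha
      obtain ⟨b', hb', hbb⟩ := hG1 b hb
      exact ⟨m a' b', ⟨a', ha', b', hb', rfl⟩, hmono haa hbb⟩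
    · rintro z ⟨a, ha, b, hb, rfl⟩
      obtain ⟨a', ha', haa⟩ := hF2 a ha
      obtain ⟨b', hb', hbb⟩ := hG2 b hb
      exact ⟨m a' b', ⟨a', ha', b', hb', rfl⟩, hmono haa hbb⟩
  · -- idempotent
    intro F _
    apply dcl_eq_of
    · rintro z ⟨a, ha, b, _, rfl⟩
      exact ⟨a, ha, hle1 a b⟩
    · intro a ha
      exact ⟨m a a, ⟨a, ha, a, ha, rfl⟩, hglb a a a (sle_refl' a) (sle_refl' a)⟩
  · -- associative
    intro F G H _ _ _
    apply dcl_eq_of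
    · rintro z ⟨_, ⟨a, ha, b, hb, rfl⟩, c, hc, rfl⟩
      refine ⟨m a (m b c), ⟨a, ha, m b c, ⟨b, hb, c, hc, rfl⟩, rfl⟩, ?_⟩
      refine hglb _ _ _ (sle_trans' (hle1 _ _) (hle1 a b)) (hglb _ _ _ ?_ ?_)
      · exact sle_trans' (hle1 _ _) (hle2 a b)
      · exact hle2 _ _
    · rintro z ⟨a, ha, _, ⟨b, hb, c, hc, rfl⟩, rfl⟩
      refine ⟨m (m a b) c, ⟨m a b, ⟨a, ha, b, hb, rfl⟩, c, hc, rfl⟩, ?_⟩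
      refine hglb _ _ _ (hglb _ _ _ ?_ ?_) (sle_trans' (hle2 _ _) (hle2 b c))
      · exact hle1 _ _
      · exact sle_trans' (hle2 _ _) (hle1 b c)
  · -- commutative
    intro F G _ _
    apply dcl_eq_of
    · rintro z ⟨a, ha, b, hb, rfl⟩
      exact ⟨m b a, ⟨b, hb, a, ha, rfl⟩, hglb _ _ _ (hle2 a b) (hle1 a b)⟩
    · rintro z ⟨b, hb, a, ha, rfl⟩
      exact ⟨m a b, ⟨a, ha, b, hb, rfl⟩, hglb _ _ _ (hle2 b a) (hle1 b a)⟩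
  · -- deflationary
    intro F G _ _
    apply dcl_mono_of
    rintro z ⟨a, ha, b, _, rfl⟩
    exact ⟨a, ha, hle1 a b⟩
  · -- distributivity 1
    intro F G H _ _ _
    have : msetOf m (F : Set X) ((G : Set X) ∪ (H : Set X)) =
        msetOf m (F : Set X) (G : Set X) ∪ msetOf m (F : Set X) (H : Set X) := by
      ext z
      constructor
      · rintro ⟨a, ha, b, hb | hb, rfl⟩
        · exact Or.inl ⟨a, ha, b, hb, rfl⟩
        · exact Or.inr ⟨a, ha, b, hb, rfl⟩
      · rintro (⟨a, ha, b, hb, rfl⟩ | ⟨a, ha, b, hb, rfl⟩)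
        · exact ⟨a, ha, b, Or.inl hb, rfl⟩
        · exact ⟨a, ha, b, Or.inr hb, rfl⟩
    rw [this]
    ext z
    constructor
    · rintro ⟨a, ha | ha, hza⟩
      · exact Or.inl ⟨a, ha, hza⟩
      · exact Or.inr ⟨a, ha, hza⟩
    · rintro (⟨a, ha, hza⟩ | ⟨a, ha, hza⟩)
      · exact ⟨a, Or.inl ha, hza⟩
      · exact ⟨a, Or.inr ha, hza⟩
  · -- distributivity 2
    intro F G H _ _ _
    apply dcl_eq_of
    · rintro a (ha | ⟨g, hg, h, hh, rfl⟩)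
      · exact ⟨m a a, ⟨a, Or.inl ha, a, Or.inl ha, rfl⟩,
          hglb a a a (sle_refl' a) (sle_refl' a)⟩
      · exact ⟨m g h, ⟨g, Or.inr hg, h, Or.inr hh, rfl⟩, sle_refl' _⟩
    · rintro z ⟨a, ha | ha, b, hb | hb, rfl⟩
      · exact ⟨a, Or.inl ha, hle1 a b⟩
      · exact ⟨a, Or.inl ha, hle1 a b⟩
      · exact ⟨b, Or.inl hb, hle2 a b⟩
      · exact ⟨m a b, Or.inr ⟨a, ha, b, hb, rfl⟩, sle_refl' _⟩
end
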